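/- arXiv:1307.3531 — 4 statements merged into one kernel-verified Lean document; each statement's English description precedes it below -/
import Mathlib

section
/- Let (U,Q) be a nondegenerate quadratic space over a field k of characteristic not 2, and let T : U → U be a self-adjoint operator whose characteristic polynomial is separable (has no repeated roots). Then no eigenvector of T (over any field extension) is isotropic; in particular, over an algebraically closed extension, every eigenvalue λ of T has an eigenvector v with ⟨v,v⟩ ≠ 0. -/
open Polynomial Matrix

section Aux

variable {k U : Type*} [Field k] [AddCommGroup U] [Module k U]

/-- Self-adjointness extends from `T` to powers of `T`. -/
lemma aux_pow_selfadjoint (B : LinearMap.BilinForm k U) (T : Module.End k U)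
    (hsa : ∀ v w : U, B (T v) w = B v (T w)) (n : ℕ) (x y : U) :
    B ((T ^ n) x) y = B x ((T ^ n) y) := by
  induction n generalizing x y with
  | zero => simp
  | succ n ih =>
      rw [pow_succ', Module.End.mul_apply, hsa, ih, ← pow_mul_comm', Module.End.mul_apply]

/-- Self-adjointness extends from `T` to polynomials in `T`. -/
lemma aux_aeval_selfadjoint (B : LinearMap.BilinForm k U) (T : Module.End k U)
    (hsa : ∀ v w : U, B (T v) w = B v (T w)) (q : k[X]) (x y : U) :
    B ((Polynomial.aeval T q) x) y = B x ((Polynomial.aeval T q) y) := by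
  induction q using Polynomial.induction_on with
  | C c => simp [Module.algebraMap_end_apply]
  | add p q hp hq => simp [hp, hq]
  | monomial n c _ =>
      simp only [_root_.map_mul, aeval_C, map_pow, aeval_X, Module.End.mul_apply,
        Module.algebraMap_end_apply, LinearMap.map_smul, LinearMap.smul_apply,
        aux_pow_selfadjoint B T hsa]

/-- If an endomorphism has two eigenvectors with the same eigenvalue `a` occurring as two
distinct members of a basis, then `(X - C a) ^ 2` divides its characteristic polynomial. -/
lemma aux_sq_dvd [FiniteDimensional k U] {ι : Type*} [Fintype ι] [DecidableEq ι]
    (b : Module.Basis ι k U) (T : Module.End k U) (a : k) (i₀ i₁ : ι) (hne : i₁ ≠ i₀)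
    (h₀ : T (b i₀) = a • b i₀) (h₁ : T (b i₁) = a • b i₁) :
    (X - C a) * (X - C a) ∣ LinearMap.charpoly T := by
  classical
  set M := LinearMap.toMatrix b b T with hMdef
  have hcolM : ∀ jj : ι, T (b jj) = a • b jj → ∀ i, M i jj = if i = jj then a else 0 := by
    intro jj hTw i
    by_cases h : i = jj
    · subst h
      simp [hMdef, LinearMap.toMatrix_apply, hTw]
    · simp [hMdef, LinearMap.toMatrix_apply, hTw, Finsupp.single_apply, h, Ne.symm h]
  set N := charmatrix M with hNdef
  -- the standard column basis vectors, as candidates for updated columns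
  set e : ι → ι → k[X] := fun j i' => if i' = j then 1 else 0 with hedef
  have hcolN : ∀ jj : ι, (∀ i : ι, M i jj = if i = jj then a else 0) →
      ∀ i : ι, N i jj = ((X - C a) • e jj) i := by
    intro jj hM i
    by_cases h : i = jj
    · subst h
      rw [hNdef, charmatrix_apply_eq, hM i]
      simp [hedef]
    · rw [hNdef, charmatrix_apply_ne _ _ _ h, hM i]
      simp [hedef, h]
  -- peeling off one factor `X - C a` from an eigenvector column
  have step : ∀ (P : Matrix ι ι k[X]) (j : ι),
      (∀ i, P i j = ((X - C a) • e j) i) →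
      P.det = (X - C a) * (P.updateCol j (e j)).det := by
    intro P j h
    have hP : P = P.updateCol j ((X - C a) • e j) := by
      refine Matrix.ext fun i j' => ?_
      rw [Matrix.updateCol_apply]
      by_cases h' : j' = j
      · subst h'; rw [if_pos rfl]; exact h i
      · simp [h']
    conv_lhs => rw [hP]
    rw [Matrix.det_updateCol_smul]
  have h1 := step N i₀ (hcolN i₀ (hcolM i₀ h₀))
  set N₁ := N.updateCol i₀ (e i₀) with hN₁def
  have hcolN₁ : ∀ i : ι, N₁ i i₁ = ((X - C a) • e i₁) i := by
    intro i
    rw [hN₁def, Matrix.updateCol_ne hne]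
    exact hcolN i₁ (hcolM i₁ h₁) i
  have h2 := step N₁ i₁ hcolN₁
  have hdvd : (X - C a) * (X - C a) ∣ N.det := by
    refine ⟨(N₁.updateCol i₁ (e i₁)).det, ?_⟩
    rw [h1, h2, mul_assoc]
  rw [← LinearMap.charpoly_toMatrix T b]
  exact hdvd

end Aux

/-- A self-adjoint operator with separable characteristic polynomial on a
nondegenerate quadratic space has no isotropic eigenvector: every eigenvector
`v` (for an eigenvalue `a`) satisfies `⟨v,v⟩ ≠ 0`. -/
theorem stmt1 {k U : Type*} [Field k] [AddCommGroup U] [Module k U]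
    [FiniteDimensional k U] (hchar : (2 : k) ≠ 0)
    (B : LinearMap.BilinForm k U) (hsymm : LinearMap.BilinForm.IsSymm B)
    (hnd : LinearMap.BilinForm.Nondegenerate B)
    (T : Module.End k U) (hsa : ∀ v w : U, B (T v) w = B v (T w))
    (hsep : (LinearMap.charpoly T).Separable)
    (v : U) (hv0 : v ≠ 0) (a : k) (hv : T v = a • v) :
    B v v ≠ 0 := by
  classical
  intro hBvv
  have heig : T.HasEigenvector a v := ⟨Module.End.mem_eigenspace_iff.2 hv, hv0⟩
  have hsf : Squarefree (LinearMap.charpoly T) := hsep.squarefree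
  have hmd : minpoly k T ∣ LinearMap.charpoly T := LinearMap.minpoly_dvd_charpoly T
  have ha : (X - C a) ∣ minpoly k T :=
    Polynomial.dvd_iff_isRoot.2 (Module.End.isRoot_of_hasEigenvalue
      (Module.End.hasEigenvalue_of_hasEigenvector heig))
  obtain ⟨g, hg⟩ := ha
  have hnd2 : ¬ (X - C a) ∣ g := by
    rintro ⟨d, hd⟩
    apply Polynomial.not_isUnit_X_sub_C a
    refine hsf (X - C a) (dvd_trans ⟨d, ?_⟩ hmd)
    rw [hg, hd]; ring
  have hcop : IsCoprime (X - C a) g :=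
    (Polynomial.irreducible_X_sub_C a).coprime_iff_not_dvd.2 hnd2
  obtain ⟨s, t, hst⟩ := hcop
  -- pick `u` with `B v u ≠ 0`
  have hex : ¬ ∀ w, B v w = 0 := fun h => hv0 (hnd.1 v h)
  push_neg at hex
  obtain ⟨u, hu⟩ := hex
  set u₁ : U := Polynomial.aeval T (t * g) u with hu₁def
  -- `u₁` is an eigenvector for `a`
  have hmu : Polynomial.aeval T (minpoly k T) u = 0 := by
    rw [minpoly.aeval]; rfl
  have hTu₁ : T u₁ = a • u₁ := by
    have h0 : Polynomial.aeval T ((X - C a) * (t * g)) u = 0 := by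
      have hq : (X - C a) * (t * g) = t * minpoly k T := by rw [hg]; ring
      rw [hq, _root_.map_mul, Module.End.mul_apply, hmu, map_zero]
    have h1 : Polynomial.aeval T ((X - C a) * (t * g)) u = T u₁ - a • u₁ := by
      rw [_root_.map_mul, Module.End.mul_apply, ← hu₁def, map_sub, aeval_X, aeval_C,
        LinearMap.sub_apply, Module.algebraMap_end_apply]
    rw [h1] at h0
    exact sub_eq_zero.1 h0
  -- `B v u₁ = B v u ≠ 0`
  have heval : (t * g).eval a = 1 := by
    have h := congrArg (Polynomial.eval a) hst
    simpa using h
  have hkey : B v u₁ = B v u := by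
    rw [hu₁def, ← aux_aeval_selfadjoint B T hsa,
      Module.End.aeval_apply_of_hasEigenvector heig, heval, one_smul]
  have hvu₁ : B v u₁ ≠ 0 := by rw [hkey]; exact hu
  -- `v` and `u₁` are linearly independent
  have hli : LinearIndependent k ![v, u₁] := by
    rw [LinearIndependent.pair_iff]
    intro c d hcd
    have h2 : c * B v v + d * B v u₁ = 0 := by
      have h := congrArg (B v) hcd
      simpa [smul_eq_mul] using h
    rw [hBvv, mul_zero, zero_add] at h2
    have hd : d = 0 := (mul_eq_zero.1 h2).resolve_right hvu₁
    subst hd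
    rw [zero_smul, add_zero] at hcd
    exact ⟨(smul_eq_zero.1 hcd).resolve_right hv0, rfl⟩
  have hli' : LinearIndepOn k id (Set.range ![v, u₁]) := (linearIndepOn_id_range_iff hli.injective).2 hli
  let b := Module.Basis.extend hli'
  haveI : Fintype (hli'.extend (Set.subset_univ _)) := FiniteDimensional.fintypeBasisIndex b
  have hvmem : v ∈ hli'.extend (Set.subset_univ _) := hli'.subset_extend _ ⟨0, rfl⟩
  have hu₁mem : u₁ ∈ hli'.extend (Set.subset_univ _) := hli'.subset_extend _ ⟨1, rfl⟩
  have hbv : b ⟨v, hvmem⟩ = v := by exact Module.Basis.extend_apply_self hli' _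
  have hbu₁ : b ⟨u₁, hu₁mem⟩ = u₁ := by exact Module.Basis.extend_apply_self hli' _
  have hne : (⟨u₁, hu₁mem⟩ : hli'.extend (Set.subset_univ _)) ≠ ⟨v, hvmem⟩ := by
    intro h
    apply hvu₁
    have hvu : u₁ = v := congrArg Subtype.val h
    rw [hvu]; exact hBvv
  have hdvd : (X - C a) * (X - C a) ∣ LinearMap.charpoly T := by
    refine aux_sq_dvd b T a ⟨v, hvmem⟩ ⟨u₁, hu₁mem⟩ hne ?_ ?_
    · rw [hbv]; exact hv
    · rw [hbu₁]; exact hTu₁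
  exact Polynomial.not_isUnit_X_sub_C a (hsf _ hdvd)
end

section
/- Let (U,Q) be a nondegenerate quadratic space over a field k of characteristic not 2, and let T be a self-adjoint operator on U with separable characteristic polynomial. Then no nonzero isotropic subspace of U is T-stable: if W ⊆ U is a T-invariant subspace on which the bilinear form vanishes identically, then W = 0. -/
open Polynomial Module LinearMap

section Aux

variable {K M : Type*} [Field K] [AddCommGroup M] [Module K M]

private lemma aeval_restrict_apply' (f : Module.End K M) {p : Submodule K M}
    (h : ∀ x ∈ p, f x ∈ p) (q : K[X]) (x : p) :
    ((Polynomial.aeval (f.restrict h) q x : p) : M) = Polynomial.aeval f q (x : M) := by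
  induction q using Polynomial.induction_on' with
  | add a b ha hb => simp [ha, hb]
  | monomial n a =>
      simp only [aeval_monomial, Module.End.mul_apply, algebraMap_end_apply, map_smul, SetLike.val_smul]
      congr 1
      rw [Module.End.pow_restrict]
      simp [LinearMap.restrict_apply]

private lemma charpoly_mul_of_isCompl' [FiniteDimensional K M] (φ : Module.End K M)
    {V W : Submodule K M} (hVW : IsCompl V W)
    (hφV : ∀ x ∈ V, φ x ∈ V) (hφW : ∀ x ∈ W, φ x ∈ W) :
    φ.charpoly = (φ.restrict hφV).charpoly * (φ.restrict hφW).charpoly := by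
  let F := φ.restrict hφV
  let G := φ.restrict hφW
  let ψ := F.prodMap G
  let e := Submodule.prodEquivOfIsCompl V W hVW
  let bV := Module.Free.chooseBasis K V
  let bW := Module.Free.chooseBasis K W
  let b := bV.prod bW
  have hψ : ψ = e.symm.conj φ := by
    apply b.ext
    simp only [Basis.prod_apply, coe_inl, coe_inr, prodMap_apply, LinearEquiv.conj_apply,
      LinearEquiv.symm_symm, Submodule.coe_prodEquivOfIsCompl, coe_comp, LinearEquiv.coe_coe,
      Function.comp_apply, coprod_apply, Submodule.coe_subtype, map_add, Sum.forall, Sum.elim_inl,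
      map_zero, ZeroMemClass.coe_zero, add_zero, LinearEquiv.eq_symm_apply, and_self,
      Submodule.coe_prodEquivOfIsCompl', restrict_coe_apply, implies_true, Sum.elim_inr, zero_add,
      e, ψ, F, G, b]
  rw [← e.symm.charpoly_conj φ, ← hψ]
  exact LinearMap.charpoly_prodMap F G

private lemma matrix_mulVec_aeval' {m : Type*} [Fintype m] [DecidableEq m]
    (N : Matrix m m K) {v : m → K} {μ : K} (hv : N.mulVec v = μ • v) (q : K[X]) :
    (Polynomial.aeval N q).mulVec v = q.eval μ • v := by
  have hpow : ∀ i : ℕ, (N ^ i).mulVec v = μ ^ i • v := by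
    intro i
    induction i with
    | zero => simp
    | succ i ih =>
        rw [pow_succ', ← Matrix.mulVec_mulVec, ih, Matrix.mulVec_smul, hv, pow_succ',
          smul_smul]
        rw [mul_comm μ (μ ^ i)]
  induction q using Polynomial.induction_on' with
  | add a b ha hb => rw [map_add, Matrix.add_mulVec, ha, hb, eval_add, add_smul]
  | monomial n a =>
      rw [aeval_monomial, eval_monomial]
      rw [Algebra.algebraMap_eq_smul_one, smul_mul_assoc, one_mul, Matrix.smul_mulVec,
        hpow, smul_smul]

private lemma matrix_charpoly_dvd_minpoly_pow' {m : Type*} [Fintype m] [DecidableEq m]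
    (M : Matrix m m K) : M.charpoly ∣ minpoly K M ^ Fintype.card m := by
  classical
  set L := AlgebraicClosure K
  let φ : K →+* L := algebraMap K L
  set N : Matrix m m L := M.map φ with hN
  have hmap : M.charpoly.map φ = N.charpoly := (Matrix.charpoly_map M φ).symm
  set Q : L[X] := (minpoly K M).map φ with hQ
  have haeval : Polynomial.aeval N Q = 0 := by
    have : Polynomial.aeval (R := K) N (minpoly K M) = 0 := by
      have h1 := Polynomial.aeval_algHom_apply
        ((AlgHom.mapMatrix (Algebra.ofId K L) : Matrix m m K →ₐ[K] Matrix m m L)) M (minpoly K M)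
      have h2 : (AlgHom.mapMatrix (Algebra.ofId K L) : Matrix m m K →ₐ[K] Matrix m m L) M = N := rfl
      rw [h2, minpoly.aeval, map_zero] at h1
      exact h1
    rw [hQ, Polynomial.aeval_map_algebraMap (R := K) (A := L) (B := Matrix m m L)] at *
    exact this
  have hroot : ∀ μ ∈ N.charpoly.roots, (X - C μ) ∣ Q := by
    intro μ hμ
    have hdet : (Matrix.scalar m μ - N).det = 0 := by
      have h0 : N.charpoly.eval μ = 0 := (Polynomial.isRoot_of_mem_roots hμ)
      rw [Matrix.charpoly, eval_det, Matrix.matPolyEquiv_charmatrix] at h0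
      simpa using h0
    obtain ⟨v, hv0, hv⟩ := (Matrix.exists_mulVec_eq_zero_iff).2 hdet
    have hev : N.mulVec v = μ • v := by
      have := hv
      rw [Matrix.sub_mulVec] at this
      have hs : (Matrix.scalar m μ).mulVec v = μ • v := by
        funext i
        rw [Matrix.scalar_apply, Matrix.mulVec_diagonal]
        simp
      have := sub_eq_zero.mp this
      rw [hs] at this
      exact this.symm
    have := matrix_mulVec_aeval' N hev Q
    rw [haeval] at this
    have hz : Q.eval μ • v = 0 := by simpa using this.symm
    have : Q.eval μ = 0 := by
      by_contra hne
      apply hv0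
      funext i
      have := congrFun hz i
      simp only [Pi.smul_apply, smul_eq_mul, Pi.zero_apply] at this
      rcases mul_eq_zero.mp this with h | h
      · exact absurd h hne
      · exact h
    rw [Polynomial.dvd_iff_isRoot]
    exact this
  have hsplit : N.charpoly = (N.charpoly.roots.map fun a => X - C a).prod :=
    (IsAlgClosed.splits N.charpoly).eq_prod_roots_of_monic (Matrix.charpoly_monic N)
  have key : ∀ s : Multiset L[X], (∀ x ∈ s, x ∣ Q) → s.prod ∣ Q ^ Multiset.card s := by
    intro s
    induction s using Multiset.induction with
    | empty => simp
    | cons a s ih =>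
        intro h
        rw [Multiset.prod_cons, Multiset.card_cons, pow_succ']
        exact mul_dvd_mul (h a (Multiset.mem_cons_self a s))
          (ih fun x hx => h x (Multiset.mem_cons_of_mem hx))
  have hcard : Multiset.card N.charpoly.roots ≤ Fintype.card m := by
    have h1 := Polynomial.card_roots' N.charpoly
    rwa [Matrix.charpoly_natDegree_eq_dim] at h1
  have hdvd : N.charpoly ∣ Q ^ Fintype.card m := by
    calc N.charpoly = (N.charpoly.roots.map fun a => X - C a).prod := hsplit
    _ ∣ Q ^ Multiset.card (N.charpoly.roots.map fun a => X - C a) := by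
        apply key
        intro x hx
        obtain ⟨μ, hμ, rfl⟩ := Multiset.mem_map.mp hx
        exact hroot μ hμ
    _ ∣ Q ^ Fintype.card m := by
        apply pow_dvd_pow
        rwa [Multiset.card_map]
  rw [← hmap, hQ, ← Polynomial.map_pow] at hdvd
  exact (Polynomial.map_dvd_map φ φ.injective (Matrix.charpoly_monic M)).mp hdvd

private lemma end_charpoly_dvd_minpoly_pow' [FiniteDimensional K M] (f : Module.End K M) :
    f.charpoly ∣ minpoly K f ^ Module.finrank K M := by
  classical
  let b := Module.Free.chooseBasis K M
  have h1 : f.charpoly = (LinearMap.toMatrix b b f).charpoly :=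
    (LinearMap.charpoly_toMatrix f b).symm
  have h2 : minpoly K (LinearMap.toMatrix b b f) = minpoly K f := LinearMap.minpoly_toMatrix b f
  have h3 : Module.finrank K M = Fintype.card (Module.Free.ChooseBasisIndex K M) :=
    Module.finrank_eq_card_chooseBasisIndex K M
  rw [h1, ← h2, h3]
  exact matrix_charpoly_dvd_minpoly_pow' _

private lemma finrank_le_of_squarefree_charpoly' [FiniteDimensional K M] (f : Module.End K M)
    (hf : Squarefree f.charpoly) {q : K[X]} (hq : q ≠ 0) (h0 : Polynomial.aeval f q = 0) :
    Module.finrank K M ≤ q.natDegree := by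
  rcases Nat.eq_zero_or_pos (Module.finrank K M) with h | h
  · omega
  have hdvd1 : f.charpoly ∣ minpoly K f := by
    refine (Squarefree.dvd_pow_iff_dvd hf ?_).mp (end_charpoly_dvd_minpoly_pow' f)
    omega
  have hdvd2 : minpoly K f ∣ q := minpoly.dvd K f h0
  have := Polynomial.natDegree_le_of_dvd (hdvd1.trans hdvd2) hq
  rwa [LinearMap.charpoly_natDegree] at this

private lemma selfadj_aeval' (B : LinearMap.BilinForm K M) (T : Module.End K M)
    (hsa : ∀ v w : M, B (T v) w = B v (T w)) (p : K[X]) (v x : M) :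
    B (Polynomial.aeval T p v) x = B v (Polynomial.aeval T p x) := by
  have hpow : ∀ (i : ℕ) (v x : M), B ((T ^ i) v) x = B v ((T ^ i) x) := by
    intro i
    induction i with
    | zero => simp
    | succ i ih =>
        intro v x
        rw [pow_succ, Module.End.mul_apply, Module.End.mul_apply, ih, hsa, ← Module.End.mul_apply,
          ← Module.End.mul_apply, ← pow_succ, pow_succ']
  induction p using Polynomial.induction_on' with
  | add a b ha hb => simp [ha, hb]
  | monomial n a =>
      simp only [aeval_monomial, Module.End.mul_apply, algebraMap_end_apply, map_smul,
        LinearMap.smul_apply, smul_eq_mul]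
      rw [hpow]

end Aux

/-- For a self-adjoint operator `T` with separable characteristic polynomial on a
nondegenerate quadratic space, no nonzero isotropic subspace is `T`-stable. -/
theorem stmt2 {k U : Type*} [Field k] [AddCommGroup U] [Module k U]
    [FiniteDimensional k U] (hchar : (2 : k) ≠ 0)
    (B : LinearMap.BilinForm k U) (hsymm : LinearMap.BilinForm.IsSymm B)
    (hnd : LinearMap.BilinForm.Nondegenerate B)
    (T : Module.End k U) (hsa : ∀ v w : U, B (T v) w = B v (T w))
    (hsep : (LinearMap.charpoly T).Separable)
    (W : Submodule k U) (hiso : ∀ w ∈ W, ∀ w' ∈ W, B w w' = 0)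
    (hstable : ∀ w ∈ W, T w ∈ W) :
    W = ⊥ := by
  classical
  rw [eq_bot_iff]
  intro w hw
  simp only [Submodule.mem_bot]
  by_contra hw0
  set m : k[X] := LinearMap.charpoly T with hm
  have hm0 : Polynomial.aeval T m = 0 := LinearMap.aeval_self_charpoly T
  have hmsf : Squarefree m := hsep.squarefree
  have hmne : m ≠ 0 := (LinearMap.charpoly_monic T).ne_zero
  -- the annihilator ideal of w
  let I : Ideal k[X] :=
    { carrier := {f | Polynomial.aeval T f w = 0}
      add_mem' := fun {a b} ha hb => by
        simp only [Set.mem_setOf_eq, map_add, LinearMap.add_apply] at *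
        rw [ha, hb, add_zero]
      zero_mem' := by simp
      smul_mem' := fun c f hf => by
        simp only [Set.mem_setOf_eq, smul_eq_mul, map_mul, Module.End.mul_apply] at *
        rw [hf, map_zero] }
  have hmemI : ∀ f : k[X], f ∈ I ↔ Polynomial.aeval T f w = 0 := fun f => Iff.rfl
  set g := Submodule.IsPrincipal.generator I with hgdef
  have hIg : I = Ideal.span {g} := (Ideal.span_singleton_generator I).symm
  have hdvdI : ∀ f, f ∈ I ↔ g ∣ f := fun f => by rw [hIg, Ideal.mem_span_singleton]
  have hgw : Polynomial.aeval T g w = 0 :=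
    (hmemI g).mp (Submodule.IsPrincipal.generator_mem I)
  have hgm : g ∣ m := (hdvdI m).mp ((hmemI m).mpr (by rw [hm0]; rfl))
  obtain ⟨h, hmgh⟩ := hgm
  have hg0 : g ≠ 0 := by
    intro hgz; exact hmne (by rw [hmgh, hgz, zero_mul])
  have hh0 : h ≠ 0 := by
    intro hhz; exact hmne (by rw [hmgh, hhz, mul_zero])
  have hgu : ¬ IsUnit g := by
    intro hu
    have h1 : (1 : k[X]) ∈ I := (hdvdI 1).mpr hu.dvd
    have h2 := (hmemI 1).mp h1
    simp only [map_one, Module.End.one_apply] at h2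
    exact hw0 h2
  have hgd : 0 < g.natDegree := by
    rcases Nat.eq_zero_or_pos g.natDegree with h0 | h0
    · obtain ⟨a, ha⟩ := Polynomial.natDegree_eq_zero.mp h0
      have ha0 : a ≠ 0 := fun haa => hg0 (by rw [← ha, haa, map_zero])
      exact absurd (ha ▸ Polynomial.isUnit_C.mpr ha0.isUnit) hgu
    · exact h0
  have hcop : IsCoprime g h := (IsRelPrime.of_squarefree_mul (hmgh ▸ hmsf)).isCoprime
  obtain ⟨a, b, hab⟩ := hcop
  -- the kernels of g(T) and h(T)
  set Kg := LinearMap.ker (Polynomial.aeval T g) with hKgdef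
  set Kh := LinearMap.ker (Polynomial.aeval T h) with hKhdef
  have hcomm : ∀ p : k[X], Commute (Polynomial.aeval T p) T := by
    intro p
    have h1 : Polynomial.aeval T (p * X) = Polynomial.aeval T (X * p) := by rw [mul_comm]
    have h2 : Polynomial.aeval T p * T = T * Polynomial.aeval T p := by simpa [map_mul] using h1
    exact h2
  have hKgT : ∀ x ∈ Kg, T x ∈ Kg := by
    intro x hx
    rw [LinearMap.mem_ker] at hx ⊢
    rw [← Module.End.mul_apply, (hcomm g).eq, Module.End.mul_apply, hx, map_zero]
  have hKhT : ∀ x ∈ Kh, T x ∈ Kh := by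
    intro x hx
    rw [LinearMap.mem_ker] at hx ⊢
    rw [← Module.End.mul_apply, (hcomm h).eq, Module.End.mul_apply, hx, map_zero]
  have hmzero : ∀ x : U, Polynomial.aeval T m x = 0 := fun x => by rw [hm0]; rfl
  have hsplitx : ∀ x : U, x = Polynomial.aeval T (b * h) x + Polynomial.aeval T (a * g) x := by
    intro x
    have h1 : Polynomial.aeval T (a * g + b * h) x = x := by
      rw [hab, map_one, Module.End.one_apply]
    rw [map_add, LinearMap.add_apply] at h1
    rw [add_comm] at h1
    exact h1.symm
  have hbh_mem : ∀ x : U, Polynomial.aeval T (b * h) x ∈ Kg := by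
    intro x
    rw [hKgdef, LinearMap.mem_ker, ← Module.End.mul_apply, ← map_mul]
    have : g * (b * h) = b * m := by rw [hmgh]; ring
    rw [this, map_mul, Module.End.mul_apply, hmzero, map_zero]
  have hag_mem : ∀ x : U, Polynomial.aeval T (a * g) x ∈ Kh := by
    intro x
    rw [hKhdef, LinearMap.mem_ker, ← Module.End.mul_apply, ← map_mul]
    have : h * (a * g) = a * m := by rw [hmgh]; ring
    rw [this, map_mul, Module.End.mul_apply, hmzero, map_zero]
  have hKcompl : IsCompl Kg Kh := by
    constructor
    · rw [Submodule.disjoint_def]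
      intro x hxg hxh
      rw [hKgdef, LinearMap.mem_ker] at hxg
      rw [hKhdef, LinearMap.mem_ker] at hxh
      have h1 := hsplitx x
      rw [map_mul, Module.End.mul_apply, hxh, map_zero, map_mul, Module.End.mul_apply, hxg,
        map_zero, add_zero] at h1
      exact h1
    · rw [codisjoint_iff, eq_top_iff]
      intro x _
      exact Submodule.mem_sup.mpr ⟨_, hbh_mem x, _, hag_mem x, (hsplitx x).symm⟩
  have hchareq : m = (T.restrict hKgT).charpoly * (T.restrict hKhT).charpoly :=
    charpoly_mul_of_isCompl' T hKcompl hKgT hKhT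
  have haevg : Polynomial.aeval (T.restrict hKgT) g = 0 := by
    ext x
    have h1 := aeval_restrict_apply' T hKgT g x
    have h2 : Polynomial.aeval T g (x : U) = 0 := x.2
    simp only [LinearMap.zero_apply, ZeroMemClass.coe_zero]
    rw [← ZeroMemClass.coe_zero Kg]
    exact Subtype.ext_iff.mp (Subtype.ext (h1.trans h2))
  have haevh : Polynomial.aeval (T.restrict hKhT) h = 0 := by
    ext x
    have h1 := aeval_restrict_apply' T hKhT h x
    have h2 : Polynomial.aeval T h (x : U) = 0 := x.2
    simp only [LinearMap.zero_apply, ZeroMemClass.coe_zero]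
    rw [← ZeroMemClass.coe_zero Kh]
    exact Subtype.ext_iff.mp (Subtype.ext (h1.trans h2))
  have hbg : Module.finrank k Kg ≤ g.natDegree :=
    finrank_le_of_squarefree_charpoly' _ (Squarefree.of_mul_left (hchareq ▸ hmsf)) hg0 haevg
  have hbh : Module.finrank k Kh ≤ h.natDegree :=
    finrank_le_of_squarefree_charpoly' _ (Squarefree.of_mul_right (hchareq ▸ hmsf)) hh0 haevh
  have hsum : Module.finrank k Kg + Module.finrank k Kh = Module.finrank k U :=
    Submodule.finrank_add_eq_of_isCompl hKcompl
  have hdeg : g.natDegree + h.natDegree = Module.finrank k U := by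
    rw [← Polynomial.natDegree_mul hg0 hh0, ← hmgh, hm]
    exact T.charpoly_natDegree
  have hKgrank : Module.finrank k Kg = g.natDegree := by omega
  -- the span of T-powers of w equals Kg
  set d := g.natDegree with hd
  have hWpow : ∀ i : ℕ, (T ^ i) w ∈ W := by
    intro i
    induction i with
    | zero => simpa using hw
    | succ i ih =>
        rw [pow_succ', Module.End.mul_apply]
        exact hstable _ ih
  have hpow_mem : ∀ i : ℕ, (T ^ i) w ∈ Kg := by
    intro i
    rw [hKgdef, LinearMap.mem_ker, ← Module.End.mul_apply, ((hcomm g).pow_right i).eq,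
      Module.End.mul_apply, hgw, map_zero]
  set v : Fin d → U := fun i => (T ^ (i : ℕ)) w with hv
  have hli : LinearIndependent k v := by
    rw [Fintype.linearIndependent_iff]
    intro c hc
    set f : k[X] := ∑ i : Fin d, Polynomial.monomial (i : ℕ) (c i) with hf
    have hfI : f ∈ I := by
      rw [hmemI, hf, map_sum, LinearMap.sum_apply]
      have : ∀ i : Fin d, Polynomial.aeval T (Polynomial.monomial (i : ℕ) (c i)) w
          = c i • (T ^ (i : ℕ)) w := by
        intro i
        rw [Polynomial.aeval_monomial, Module.End.mul_apply, algebraMap_end_apply]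
      rw [Finset.sum_congr rfl fun i _ => this i]
      exact hc
    have hgf : g ∣ f := (hdvdI f).mp hfI
    have hfdeg : f.natDegree < d := by
      have h1 : f.natDegree ≤ d - 1 := by
        apply Polynomial.natDegree_sum_le_of_forall_le
        intro i _
        have := Polynomial.natDegree_monomial_le (c i) (m := (i : ℕ))
        omega
      omega
    have hf0 : f = 0 := Polynomial.eq_zero_of_dvd_of_natDegree_lt hgf hfdeg
    intro i
    have hcoeff : f.coeff (i : ℕ) = c i := by
      rw [hf, Polynomial.finset_sum_coeff]
      rw [Finset.sum_eq_single i]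
      · simp
      · intro j _ hji
        rw [Polynomial.coeff_monomial]
        have : (j : ℕ) ≠ (i : ℕ) := fun hh => hji (Fin.ext hh)
        simp [this]
      · intro hi
        exact absurd (Finset.mem_univ i) hi
    rw [hf0] at hcoeff
    simpa using hcoeff.symm
  have hspan : Submodule.span k (Set.range v) = Kg := by
    apply Submodule.eq_of_le_of_finrank_le
    · rw [Submodule.span_le]
      rintro _ ⟨i, rfl⟩
      exact hpow_mem (i : ℕ)
    · rw [finrank_span_eq_card hli]
      simp only [Fintype.card_fin]
      omega
  -- conclude : B w x = 0 for all x
  apply hw0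
  apply hnd.1 w
  intro x
  have hx := hsplitx x
  rw [hx, map_add]
  have h1 : B w (Polynomial.aeval T (a * g) x) = 0 := by
    rw [← selfadj_aeval' B T hsa (a * g) w x, map_mul, Module.End.mul_apply, hgw, map_zero,
      map_zero, LinearMap.zero_apply]
  have h2 : B w (Polynomial.aeval T (b * h) x) = 0 := by
    have hmem : Polynomial.aeval T (b * h) x ∈ Submodule.span k (Set.range v) := by
      rw [hspan]; exact hbh_mem x
    refine Submodule.span_induction (p := fun y _ => B w y = 0) ?_ ?_ ?_ ?_ hmem
    · rintro y ⟨i, rfl⟩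
      exact hiso w hw _ (hWpow (i : ℕ))
    · simp
    · intro y z _ _ hy hz
      rw [map_add, hy, hz, add_zero]
    · intro c' y _ hy
      rw [map_smul, hy, smul_zero]
  rw [h1, h2, add_zero]
end

section
/- Let (U,Q) be a nondegenerate quadratic space of dimension N over a field k of characteristic not 2, and let T be a self-adjoint operator on U with separable characteristic polynomial f. Then the stabilizer of T in the orthogonal group O(U)(k) equals the 2-torsion of (k[T])^× , i.e., {g ∈ k[T] : g² = 1}; in particular it is isomorphic to the 2-torsion of the unit group of L = k[x]/(f). -/
open Polynomial


theorem minpoly_eq_charpoly_of_sep {k U : Type*} [Field k] [AddCommGroup U] [Module k U]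
    [FiniteDimensional k U] (T : Module.End k U)
    (hsep : (LinearMap.charpoly T).Separable) :
    minpoly k T = LinearMap.charpoly T := by
  classical
  have hint : IsIntegral k T := .of_finite k T
  set n := Module.finrank k U with hn
  set p := LinearMap.charpoly T with hp
  set q := minpoly k T with hq
  have hqm : q.Monic := minpoly.monic hint
  have hq0 : q ≠ 0 := hqm.ne_zero
  -- key: natDegree q ≥ n
  have hkey : n ≤ q.natDegree := by
    set K := AlgebraicClosure k
    let σ : k →+* K := algebraMap k K
    let b := Module.finBasis k U
    set M : Matrix (Fin n) (Fin n) k := LinearMap.toMatrix b b T with hM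
    have hMp : M.charpoly = p := LinearMap.charpoly_toMatrix T b
    have hMq : minpoly k M = q := LinearMap.minpoly_toMatrix b T
    set M' : Matrix (Fin n) (Fin n) K := M.map σ with hM'
    have hM'aeval : aeval M' (q.map σ) = 0 := by
      rw [aeval_map_algebraMap]
      have : M' = (AlgHom.mapMatrix (Algebra.ofId k K)) M := rfl
      rw [this, aeval_algHom_apply, ← hMq, minpoly.aeval, map_zero]
    have hdvd : minpoly K M' ∣ q.map σ := minpoly.dvd K M' hM'aeval
    have hq0' : q.map σ ≠ 0 := Polynomial.map_ne_zero hq0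
    -- every root of p.map σ is a root of q.map σ
    have hsub : (p.map σ).roots.toFinset ⊆ (q.map σ).roots.toFinset := by
      intro μ hμ
      rw [Multiset.mem_toFinset] at hμ ⊢
      replace hμ : (map σ p).IsRoot μ := isRoot_of_mem_roots hμ
      rw [mem_roots hq0']
      have hroot : (M'.charpoly).eval μ = 0 := by
        rw [Matrix.charpoly_map, hMp]; exact hμ
      have hdet : (Matrix.scalar (Fin n) μ - M').det = 0 := by
        rw [← hroot, Matrix.charpoly, _root_.eval_det, Matrix.matPolyEquiv_charmatrix]
        simp
      obtain ⟨v, hv0, hv⟩ := Matrix.exists_mulVec_eq_zero_iff.mpr hdet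
      have heig : Module.End.HasEigenvalue (Matrix.toLin' M') μ := by
        rw [Module.End.hasEigenvalue_iff, Module.End.eigenspace_def, Ne, Submodule.eq_bot_iff]
        intro h
        refine hv0 (h v ?_)
        rw [LinearMap.mem_ker, LinearMap.sub_apply, Matrix.toLin'_apply,
          LinearMap.smul_apply, Module.End.one_apply]
        have h2 : μ • v - M'.mulVec v = 0 := by
          rw [Matrix.sub_mulVec] at hv
          have hsc : (Matrix.scalar (Fin n) μ).mulVec v = μ • v := by
            simp [Matrix.scalar_apply]
          rwa [hsc] at hv
        rw [sub_eq_zero] at h2 ⊢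
        exact h2.symm
      have : (minpoly K (Matrix.toLin' M')).IsRoot μ :=
        Module.End.isRoot_of_hasEigenvalue heig
      rw [Matrix.minpoly_toLin'] at this
      exact IsRoot.dvd this hdvd
    have hpsplit : Splits (p.map σ) := IsAlgClosed.splits _
    have hcard : (p.map σ).roots.toFinset.card = n := by
      rw [Multiset.toFinset_card_of_nodup (nodup_roots (hsep.map)),
        (splits_iff_card_roots).mp hpsplit, natDegree_map_eq_of_injective σ.injective,
        hp, T.charpoly_natDegree]
    calc n = (p.map σ).roots.toFinset.card := hcard.symm
      _ ≤ (q.map σ).roots.toFinset.card := Finset.card_le_card hsub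
      _ ≤ Multiset.card (q.map σ).roots := Multiset.toFinset_card_le _
      _ ≤ (q.map σ).natDegree := card_roots' _
      _ = q.natDegree := natDegree_map_eq_of_injective σ.injective _
  obtain ⟨c, hc⟩ := T.minpoly_dvd_charpoly
  have hpm : p.Monic := T.charpoly_monic
  have hc0 : c ≠ 0 := by rintro rfl; rw [mul_zero] at hc; exact hpm.ne_zero hc
  have hcm : c.Monic := hqm.of_mul_monic_left (hc ▸ hpm)
  have hdeg : p.natDegree = q.natDegree + c.natDegree := by
    rw [hp, hc, ← hq, natDegree_mul hq0 hc0]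
  have hpn : p.natDegree = n := T.charpoly_natDegree
  have : c.natDegree = 0 := by omega
  rw [hcm.natDegree_eq_zero.mp this, mul_one] at hc
  exact hc.symm

theorem exists_cyclic_vector {k U : Type*} [Field k] [AddCommGroup U] [Module k U]
    [FiniteDimensional k U] (T : Module.End k U)
    (hsep : (LinearMap.charpoly T).Separable) :
    ∃ v : U, ∀ w : U, ∃ r : Polynomial k, Polynomial.aeval T r v = w := by
  classical
  set n := Module.finrank k U with hn
  set μ := minpoly k T with hμdef
  have hint : IsIntegral k T := .of_finite k T
  have hmono : μ.Monic := minpoly.monic hint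
  have hμ0 : μ ≠ 0 := hmono.ne_zero
  have hmc : μ = LinearMap.charpoly T := minpoly_eq_charpoly_of_sep T hsep
  have hsq : Squarefree μ := by rw [hmc]; exact hsep.squarefree
  have hdeg : μ.natDegree = n := by rw [hmc, LinearMap.charpoly_natDegree]
  have hnodup : (UniqueFactorizationMonoid.normalizedFactors μ).Nodup :=
    (UniqueFactorizationMonoid.squarefree_iff_nodup_normalizedFactors hμ0).mp hsq
  set s : Finset k[X] := ⟨UniqueFactorizationMonoid.normalizedFactors μ, hnodup⟩ with hs
  have hprime : ∀ p ∈ s, Prime p := fun p hp =>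
    UniqueFactorizationMonoid.prime_of_normalized_factor p hp
  have hmonic : ∀ p ∈ s, p.Monic := by
    intro p hp
    have h1 : normalize p = p := UniqueFactorizationMonoid.normalize_normalized_factor p hp
    rw [← h1]; exact monic_normalize (hprime p hp).ne_zero
  have hprod : ∏ p ∈ s, p = μ := by
    have h1 : Associated (∏ p ∈ s, p) μ := by
      rw [Finset.prod_eq_multiset_prod]
      simpa only [Multiset.map_id'] using UniqueFactorizationMonoid.prod_normalizedFactors hμ0
    exact eq_of_monic_of_associated (monic_prod_of_monic _ _ hmonic) hmono h1
  set q : k[X] → k[X] := fun p => ∏ p' ∈ s.erase p, p' with hqdef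
  have hpq : ∀ p ∈ s, p * q p = μ := by
    intro p hp
    rw [← hprod]
    exact Finset.mul_prod_erase s (fun x => x) hp
  have hpeq : ∀ p ∈ s, ∀ p' ∈ s, p ∣ p' → p = p' := by
    intro p hp p' hp' hdvd
    exact eq_of_monic_of_associated (hmonic p hp) (hmonic p' hp')
      (((hprime p hp).irreducible).associated_of_dvd ((hprime p' hp').irreducible) hdvd)
  have hpndvdq : ∀ p ∈ s, ¬ p ∣ q p := by
    intro p hp hdvd
    obtain ⟨p', hp', hdvd'⟩ := (hprime p hp).exists_mem_finset_dvd hdvd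
    exact (Finset.ne_of_mem_erase hp')
      (hpeq p hp p' (Finset.mem_of_mem_erase hp') hdvd').symm
  have hqne : ∀ p ∈ s, ∃ u : U, Polynomial.aeval T (q p) u ≠ 0 := by
    intro p hp
    by_contra hcon
    push_neg at hcon
    have hev : Polynomial.aeval T (q p) = 0 := by ext u; exact hcon u
    have hdvd : μ ∣ q p := minpoly.dvd k T hev
    have hq0 : q p ≠ 0 := by
      intro h0
      exact hμ0 (by rw [← hpq p hp, h0, mul_zero])
    have h2 : p * q p ∣ 1 * q p := by rw [hpq p hp, one_mul]; exact hdvd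
    exact (hprime p hp).not_unit (isUnit_of_dvd_one ((mul_dvd_mul_iff_right hq0).mp h2))
  choose u hu using hqne
  set w : (p : k[X]) → p ∈ s → U := fun p hp => Polynomial.aeval T (q p) (u p hp) with hwdef
  set v : U := ∑ p ∈ s.attach, w p.1 p.2 with hv
  refine ⟨v, ?_⟩
  -- any polynomial killing v is divisible by μ
  have hann : ∀ r : k[X], Polynomial.aeval T r v = 0 → μ ∣ r := by
    intro r hr
    rw [← hprod]
    refine Finset.prod_dvd_of_coprime ?_ ?_
    · intro p hp p' hp' hne
      refine ((hprime p hp).irreducible.coprime_iff_not_dvd).mpr fun hdvd =>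
        hne (hpeq p hp p' hp' hdvd)
    · intro p hp
      have hzero : ∀ (p' : k[X]) (hp' : p' ∈ s), p' ≠ p →
          Polynomial.aeval T (q p * r) (w p' hp') = 0 := by
        intro p' hp' hne
        have hμdvd : μ ∣ q p * r * q p' := by
          have h1 : p ∣ q p' := Finset.dvd_prod_of_mem _ (Finset.mem_erase.mpr ⟨hne.symm, hp⟩)
          calc μ = p * q p := (hpq p hp).symm
            _ ∣ q p' * q p := mul_dvd_mul h1 dvd_rfl
            _ ∣ q p * r * q p' := ⟨r, by ring⟩
        obtain ⟨c, hc⟩ := hμdvd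
        have : Polynomial.aeval T (q p * r * q p') = 0 := by
          rw [hc, map_mul, hμdef, minpoly.aeval, zero_mul]
        calc Polynomial.aeval T (q p * r) (w p' hp')
            = Polynomial.aeval T (q p * r * q p') (u p' hp') := by
              rw [hwdef, map_mul (Polynomial.aeval T) (q p * r), Module.End.mul_apply]
          _ = 0 := by rw [this]; rfl
      have hone : Polynomial.aeval T (q p * r) (w p hp) = 0 := by
        have h0 : Polynomial.aeval T (q p * r) v = 0 := by
          rw [map_mul, Module.End.mul_apply, hr, map_zero]
        rw [hv, map_sum] at h0
        rwa [Finset.sum_eq_single_of_mem (⟨p, hp⟩ : {x // x ∈ s}) (Finset.mem_attach s _)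
          (fun p' _ hne => hzero p'.1 p'.2 (fun h => hne (Subtype.ext h)))] at h0
      -- p kills w p
      have hkill : Polynomial.aeval T p (w p hp) = 0 := by
        rw [hwdef, ← Module.End.mul_apply, ← map_mul, hpq p hp, hμdef, minpoly.aeval,
          LinearMap.zero_apply]
      by_contra hndvd
      have hcop : IsCoprime p (q p * r) := by
        refine ((hprime p hp).irreducible.coprime_iff_not_dvd).mpr fun hdvd => ?_
        rcases (hprime p hp).dvd_mul.mp hdvd with h | h
        · exact hpndvdq p hp h
        · exact hndvd h
      obtain ⟨a, b, hab⟩ := hcop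
      have h3 : Polynomial.aeval T (q p) (Polynomial.aeval T r (w p hp)) = 0 := by
        rw [← Module.End.mul_apply, ← map_mul]
        exact hone
      have hthis := congrArg (fun y : k[X] => Polynomial.aeval T y (w p hp)) hab
      simp only [map_add, map_mul, map_one, LinearMap.add_apply, Module.End.mul_apply,
        Module.End.one_apply] at hthis
      rw [hkill, h3, map_zero, map_zero, add_zero] at hthis
      exact hu p hp hthis.symm
  -- dimension count: the orbit spans
  have hφ : ∃ φ : k[X] →ₗ[k] U, ∀ r, φ r = Polynomial.aeval T r v := by
    refine ⟨{ toFun := fun r => Polynomial.aeval T r v,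
              map_add' := fun a b => by
                show Polynomial.aeval T (a + b) v = _
                rw [map_add, LinearMap.add_apply],
              map_smul' := fun c a => by
                show Polynomial.aeval T (c • a) v = _
                rw [map_smul, LinearMap.smul_apply]
                rfl }, fun r => rfl⟩
  obtain ⟨φ, hφeq⟩ := hφ
  set ψ : degreeLT k n →ₗ[k] U := φ.comp (Submodule.subtype _) with hψ
  have hinj : Function.Injective ψ := by
    rw [← LinearMap.ker_eq_bot]
    rw [Submodule.eq_bot_iff]
    rintro ⟨x, hx⟩ hker
    have hx0 : Polynomial.aeval T x v = 0 := by
      have : ψ ⟨x, hx⟩ = 0 := hker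
      rwa [hψ, LinearMap.comp_apply, Submodule.subtype_apply, hφeq] at this
    have hdvd : μ ∣ x := hann x hx0
    have hx00 : x = 0 := by
      by_contra hx0'
      have h1 : (μ).degree ≤ x.degree := degree_le_of_dvd hdvd hx0'
      rw [mem_degreeLT] at hx
      rw [degree_eq_natDegree hμ0, hdeg] at h1
      exact absurd (lt_of_le_of_lt h1 hx) (lt_irrefl _)
    exact Subtype.ext hx00
  have hfd : FiniteDimensional k (degreeLT k n) :=
    Module.Finite.equiv (degreeLTEquiv k n).symm
  have hfr : Module.finrank k (degreeLT k n) = n := by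
    rw [LinearEquiv.finrank_eq (degreeLTEquiv k n), Module.finrank_fin_fun]
  have htop : LinearMap.range ψ = ⊤ := by
    apply Submodule.eq_top_of_finrank_eq
    rw [LinearMap.finrank_range_of_inj hinj, hfr]
  intro w'
  obtain ⟨x, hx⟩ := LinearMap.range_eq_top.mp htop w'
  exact ⟨x.1, by rwa [hψ, LinearMap.comp_apply, Submodule.subtype_apply, hφeq] at hx⟩

theorem commute_aeval {R A : Type*} [CommSemiring R] [Semiring A] [Algebra R A]
    {a b : A} (h : a * b = b * a) (p : Polynomial R) :
    a * Polynomial.aeval b p = Polynomial.aeval b p * a := by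
  induction p using Polynomial.induction_on with
  | C c => rw [Polynomial.aeval_C]; exact (Algebra.commutes c a).symm
  | add p q hp hq => rw [map_add, mul_add, add_mul, hp, hq]
  | monomial n c ih =>
    have e : Polynomial.aeval b (Polynomial.C c * Polynomial.X ^ (n + 1))
        = Polynomial.aeval b (Polynomial.C c * Polynomial.X ^ n) * b := by
      rw [pow_succ, ← mul_assoc, map_mul, Polynomial.aeval_X]
    rw [e, ← mul_assoc, ih, mul_assoc, h, ← mul_assoc]

theorem aeval_selfadj {k U : Type*} [Field k] [AddCommGroup U] [Module k U]
    (B : LinearMap.BilinForm k U) (T : Module.End k U)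
    (hsa : ∀ v w : U, B (T v) w = B v (T w)) (r : Polynomial k) :
    ∀ v w : U, B (Polynomial.aeval T r v) w = B v (Polynomial.aeval T r w) := by
  induction r using Polynomial.induction_on with
  | C a =>
    intro v w
    simp only [Polynomial.aeval_C, Module.algebraMap_end_apply]
    rw [map_smul, LinearMap.smul_apply, map_smul]
  | add p q hp hq =>
    intro v w
    simp only [map_add, LinearMap.add_apply, hp v w, hq v w]
  | monomial n a ih =>
    intro v w
    have e : Polynomial.aeval T (Polynomial.C a * Polynomial.X ^ (n + 1))
        = Polynomial.aeval T (Polynomial.C a * Polynomial.X ^ n) * T := by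
      rw [pow_succ, ← mul_assoc, map_mul, Polynomial.aeval_X]
    have hcT : T * Polynomial.aeval T (Polynomial.C a * Polynomial.X ^ n)
        = Polynomial.aeval T (Polynomial.C a * Polynomial.X ^ n) * T := commute_aeval rfl _
    rw [e, Module.End.mul_apply, ih (T v) w, hsa v _, ← Module.End.mul_apply T, hcT,
      Module.End.mul_apply]

/-- The stabilizer of a self-adjoint operator `T` with separable characteristic
polynomial in the orthogonal group `O(U)(k)` equals the 2-torsion of `k[T]`:
the set of isometries commuting with `T` is exactly
`{g ∈ k[T] : g² = 1}` (isomorphic to the 2-torsion of `(k[x]/(f))^×`). -/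
theorem stmt6 {k U : Type*} [Field k] [AddCommGroup U] [Module k U]
    [FiniteDimensional k U] (hchar : (2 : k) ≠ 0)
    (B : LinearMap.BilinForm k U) (hsymm : LinearMap.BilinForm.IsSymm B)
    (hnd : LinearMap.BilinForm.Nondegenerate B)
    (T : Module.End k U) (hsa : ∀ v w : U, B (T v) w = B v (T w))
    (hsep : (LinearMap.charpoly T).Separable) :
    {g : Module.End k U | (∀ v w : U, B (g v) (g w) = B v w) ∧ g * T = T * g} =
      {g : Module.End k U | g ∈ Algebra.adjoin k {T} ∧ g * g = 1} := by
  classical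
  ext g
  simp only [Set.mem_setOf_eq]
  have hadjoin : ∀ h : Module.End k U,
      h ∈ Algebra.adjoin k {T} ↔ ∃ r : Polynomial k, Polynomial.aeval T r = h := by
    intro h
    rw [Algebra.adjoin_singleton_eq_range_aeval]
    exact AlgHom.mem_range _
  constructor
  · rintro ⟨horth, hcomm⟩
    obtain ⟨v, hv⟩ := exists_cyclic_vector T hsep
    obtain ⟨r, hr⟩ := hv (g v)
    have hg : g = Polynomial.aeval T r := by
      apply LinearMap.ext
      intro x
      obtain ⟨ρ, hρ⟩ := hv x
      have hcg : g * Polynomial.aeval T ρ = Polynomial.aeval T ρ * g := commute_aeval hcomm ρ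
      calc g x = g (Polynomial.aeval T ρ v) := by rw [hρ]
        _ = Polynomial.aeval T ρ (g v) := by
            rw [← Module.End.mul_apply, hcg, Module.End.mul_apply]
        _ = Polynomial.aeval T ρ (Polynomial.aeval T r v) := by rw [hr]
        _ = Polynomial.aeval T r (Polynomial.aeval T ρ v) := by
            rw [← Module.End.mul_apply, ← map_mul, mul_comm ρ r, map_mul, Module.End.mul_apply]
        _ = Polynomial.aeval T r x := by rw [hρ]
    refine ⟨(hadjoin g).mpr ⟨r, hg.symm⟩, ?_⟩
    have hsadj := aeval_selfadj B T hsa r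
    apply LinearMap.ext
    intro x
    have hzero : ∀ y : U, B ((g * g) x - x) y = 0 := by
      intro y
      rw [map_sub, LinearMap.sub_apply]
      have h1 : B ((g * g) x) y = B x y := by
        have h2 : B (g (g x)) y = B (g x) (g y) := by
          rw [hg]
          exact hsadj (Polynomial.aeval T r x) y
        rw [Module.End.mul_apply, h2, horth]
      rw [h1, sub_self]
    have := hnd.1 _ hzero
    rw [sub_eq_zero] at this
    rw [this, Module.End.one_apply]
  · rintro ⟨hmem, hsq2⟩
    obtain ⟨r, hr⟩ := (hadjoin g).mp hmem
    have hsadj := aeval_selfadj B T hsa r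
    constructor
    · intro v w
      calc B (g v) (g w) = B v (g (g w)) := by rw [← hr]; exact hsadj v _
        _ = B v ((g * g) w) := by rw [Module.End.mul_apply]
        _ = B v w := by rw [hsq2, Module.End.one_apply]
    · rw [← hr]
      exact (commute_aeval rfl r).symm
end

section
/- Let U be a (2n+2)-dimensional vector space over a field k of characteristic not 2 with basis e₁,...,e_{n+1}, f_{n+1},...,f₁ satisfying ⟨e_i,f_j⟩ = δ_{ij} and ⟨e_i,e_j⟩ = ⟨f_i,f_j⟩ = 0. Let T be a self-adjoint operator with separable characteristic polynomial such that ⟨e_i, T e_j⟩ = 0 whenever i + j ≤ 2n+1 and i ≤ j in the pattern of equation (distinguished shape), i.e., T e_i ∈ Span{e₁,...,e_{n+1}} for i = 1,...,n. Then Span{e₁,...,e_n, T e₁,...,T e_n} = Span{e₁,...,e_{n+1}}, an isotropic (n+1)-plane. -/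
open Polynomial

section Aux
variable {k U : Type*} [Field k] [AddCommGroup U] [Module k U]

private lemma charpoly_restrict_top [FiniteDimensional k U] (T : Module.End k U)
    (h : ∀ x ∈ (⊤ : Submodule k U), T x ∈ (⊤ : Submodule k U)) :
    (T.restrict h).charpoly = T.charpoly := by
  have hconj : T = (Submodule.topEquiv (R := k) (M := U)).conj (T.restrict h) := by
    ext u
    simp [LinearEquiv.conj_apply, LinearMap.restrict_apply]
  conv_rhs => rw [hconj, LinearEquiv.charpoly_conj]

private lemma charpoly_restrict_mul [FiniteDimensional k U] (T : Module.End k U)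
    {p q r : Submodule k U}
    (hp : ∀ x ∈ p, T x ∈ p) (hq : ∀ x ∈ q, T x ∈ q) (hr : ∀ x ∈ r, T x ∈ r)
    (hqp : q ≤ p) (hrp : r ≤ p) (hdis : Disjoint q r) (hsup : q ⊔ r = p) :
    (T.restrict hp).charpoly = (T.restrict hq).charpoly * (T.restrict hr).charpoly := by
  classical
  set q' : Submodule k p := q.comap p.subtype with hq'
  set r' : Submodule k p := r.comap p.subtype with hr'
  have hcompl : IsCompl q' r' := by
    constructor
    · rw [disjoint_iff, eq_bot_iff]
      rintro ⟨x, hxp⟩ hx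
      simp only [Submodule.mem_inf, hq', hr', Submodule.mem_comap, Submodule.subtype_apply] at hx
      have : x ∈ q ⊓ r := ⟨hx.1, hx.2⟩
      rw [disjoint_iff.mp hdis, Submodule.mem_bot] at this
      simp [this]
    · rw [codisjoint_iff, eq_top_iff]
      rintro ⟨x, hxp⟩ -
      have hx : x ∈ q ⊔ r := hsup ▸ hxp
      obtain ⟨a, ha, b, hb, hab⟩ := Submodule.mem_sup.mp hx
      have : (⟨x, hxp⟩ : p) = (⟨a, hqp ha⟩ : p) + (⟨b, hrp hb⟩ : p) := by
        apply Subtype.ext; simp [← hab]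
      rw [this]
      exact Submodule.add_mem_sup (show (⟨a, hqp ha⟩ : p) ∈ q' from ha)
        (show (⟨b, hrp hb⟩ : p) ∈ r' from hb)
  let eq1 : q' ≃ₗ[k] q := Submodule.comapSubtypeEquivOfLe hqp
  let er1 : r' ≃ₗ[k] r := Submodule.comapSubtypeEquivOfLe hrp
  let E : (q × r) ≃ₗ[k] p :=
    (eq1.symm.prodCongr er1.symm).trans (Submodule.prodEquivOfIsCompl q' r' hcompl)
  have hval : ∀ z : q × r, ((E z : p) : U) = (z.1 : U) + (z.2 : U) := by
    rintro ⟨z1, z2⟩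
    simp only [E, LinearEquiv.trans_apply, LinearEquiv.prodCongr_apply,
      Submodule.coe_prodEquivOfIsCompl']
    rw [Submodule.coe_add,
      ← Submodule.comapSubtypeEquivOfLe_apply_coe hqp (eq1.symm z1),
      ← Submodule.comapSubtypeEquivOfLe_apply_coe hrp (er1.symm z2)]
    simp [eq1, er1]
  have hkey : T.restrict hp = E.conj ((T.restrict hq).prodMap (T.restrict hr)) := by
    apply LinearMap.ext
    intro x
    obtain ⟨z, rfl⟩ := E.surjective x
    rw [LinearEquiv.conj_apply]
    simp only [LinearMap.coe_comp, LinearEquiv.coe_coe, Function.comp_apply,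
      LinearEquiv.symm_apply_apply]
    apply Subtype.ext
    rw [LinearMap.restrict_coe_apply, hval, hval]
    simp only [LinearMap.prodMap_apply, LinearMap.restrict_coe_apply]
    rw [map_add]
  rw [hkey, LinearEquiv.charpoly_conj, LinearMap.charpoly_prodMap]


private lemma aeval_selfadj_s8 (B : LinearMap.BilinForm k U) (T : Module.End k U)
    (hT : ∀ v w : U, B (T v) w = B v (T w)) (g : k[X]) (v w : U) :
    B ((aeval T g) v) w = B v ((aeval T g) w) := by
  have hpow : ∀ (m : ℕ) (v w : U), B ((T ^ m) v) w = B v ((T ^ m) w) := by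
    intro m
    induction m with
    | zero => simp
    | succ m ih =>
      intro v w
      rw [pow_succ, Module.End.mul_apply, ih, hT, ← Module.End.mul_apply, ← pow_succ',
        pow_succ, Module.End.mul_apply]
  induction g using Polynomial.induction_on' with
  | add p q hp hq => simp [map_add, hp, hq]
  | monomial m a =>
    simp only [aeval_monomial, Module.End.mul_apply, Module.algebraMap_end_apply,
      map_smul, LinearMap.smul_apply, LinearMap.map_smul]
    rw [hpow]

private lemma aeval_restrict_coe (T : Module.End k U) {p : Submodule k U}
    (h : ∀ x ∈ p, T x ∈ p) (g : k[X]) (x : p) :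
    (aeval T g) (x : U) = ((aeval (T.restrict h) g) x : U) := by
  induction g using Polynomial.induction_on' with
  | add a b ha hb => simp [map_add, ha, hb]
  | monomial m a =>
    simp only [aeval_monomial, Module.End.mul_apply, Module.algebraMap_end_apply]
    rw [Module.End.pow_restrict m h]
    simp [LinearMap.restrict_coe_apply]


private lemma no_invt_isotropic [FiniteDimensional k U] (B : LinearMap.BilinForm k U)
    (hnd : B.Nondegenerate) (T : Module.End k U)
    (hT : ∀ v w : U, B (T v) w = B v (T w))
    (hsep : (LinearMap.charpoly T).Separable)
    (X : Submodule k U) (hX : ∀ x ∈ X, T x ∈ X)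
    (hiso : ∀ x ∈ X, ∀ y ∈ X, B x y = 0) : X = ⊥ := by
  classical
  have hss : T.IsSemisimple :=
    Module.End.isSemisimple_of_squarefree_aeval_eq_zero hsep.squarefree
      (LinearMap.aeval_self_charpoly T)
  set Y := B.orthogonal X with hYdef
  have hXY : X ≤ Y := by
    intro x hx
    rw [LinearMap.BilinForm.mem_orthogonal_iff]
    intro y hy
    exact hiso y hy x hx
  have hYr : ∀ y ∈ Y, T y ∈ Y := by
    intro y hy
    rw [LinearMap.BilinForm.mem_orthogonal_iff]
    intro x hx
    rw [← hT x y]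
    exact LinearMap.BilinForm.mem_orthogonal_iff.mp hy _ (hX x hx)
  have hXi : X ∈ T.invtSubmodule := (Module.End.mem_invtSubmodule T).mpr (fun x hx => hX x hx)
  have hYi : Y ∈ T.invtSubmodule := (Module.End.mem_invtSubmodule T).mpr (fun y hy => hYr y hy)
  obtain ⟨Z', hZ'Y, hZ'i, hdisj, hsupY⟩ :=
    (Module.End.isSemisimple_restrict_iff Y hYi).mp (hss.restrict hYi) X hXi hXY
  obtain ⟨Z'', hZ''i, hcompl⟩ := Module.End.isSemisimple_iff.mp hss Y hYi
  have hZ'r : ∀ x ∈ Z', T x ∈ Z' := fun x hx => (Module.End.mem_invtSubmodule T).mp hZ'i hx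
  have hZ''r : ∀ x ∈ Z'', T x ∈ Z'' := fun x hx => (Module.End.mem_invtSubmodule T).mp hZ''i hx
  have htop : ∀ x ∈ (⊤ : Submodule k U), T x ∈ (⊤ : Submodule k U) := fun x _ => trivial
  have h1 : T.charpoly = (T.restrict hYr).charpoly * (T.restrict hZ''r).charpoly := by
    rw [← charpoly_restrict_top T htop]
    exact charpoly_restrict_mul T htop hYr hZ''r le_top le_top hcompl.disjoint
      (codisjoint_iff.mp hcompl.codisjoint)
  have h2 : (T.restrict hYr).charpoly
      = (T.restrict hX).charpoly * (T.restrict hZ'r).charpoly :=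
    charpoly_restrict_mul T hYr hX hZ'r hXY hZ'Y hdisj hsupY
  have hdvd : (T.restrict hX).charpoly * (T.restrict hZ''r).charpoly ∣ T.charpoly :=
    ⟨(T.restrict hZ'r).charpoly, by rw [h1, h2]; ring⟩
  have hcop : IsCoprime (T.restrict hX).charpoly (T.restrict hZ''r).charpoly := by
    rw [← EuclideanDomain.gcd_isUnit_iff]
    exact hsep.squarefree _
      ((mul_dvd_mul (EuclideanDomain.gcd_dvd_left _ _) (EuclideanDomain.gcd_dvd_right _ _)).trans
        hdvd)
  rw [eq_bot_iff]
  intro x hx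
  rw [Submodule.mem_bot]
  apply hnd.1
  intro u
  have hu : u ∈ Y ⊔ Z'' := by rw [codisjoint_iff.mp hcompl.codisjoint]; trivial
  obtain ⟨y, hy, z, hz, rfl⟩ := Submodule.mem_sup.mp hu
  have hBxy : B x y = 0 := LinearMap.BilinForm.mem_orthogonal_iff.mp hy x hx
  have hBxz : B x z = 0 := by
    obtain ⟨a, b, hab⟩ := hcop
    have e1 : (aeval T) (a * (T.restrict hX).charpoly) x = 0 := by
      rw [map_mul, Module.End.mul_apply]
      have : (aeval T (T.restrict hX).charpoly) x = 0 := by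
        rw [show x = ((⟨x, hx⟩ : X) : U) from rfl,
          aeval_restrict_coe T hX _ ⟨x, hx⟩, LinearMap.aeval_self_charpoly]
        simp
      rw [this, map_zero]
    have e2 : (aeval T) (b * (T.restrict hZ''r).charpoly) z = 0 := by
      rw [map_mul, Module.End.mul_apply]
      have : (aeval T (T.restrict hZ''r).charpoly) z = 0 := by
        rw [show z = ((⟨z, hz⟩ : Z'') : U) from rfl,
          aeval_restrict_coe T hZ''r _ ⟨z, hz⟩, LinearMap.aeval_self_charpoly]
        simp
      rw [this, map_zero]
    have : B x z = B x ((aeval T (a * (T.restrict hX).charpoly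
        + b * (T.restrict hZ''r).charpoly)) z) := by
      rw [hab]; simp
    rw [this, map_add, LinearMap.add_apply, map_add, e2, map_zero, add_zero,
      ← aeval_selfadj_s8 B T hT, e1, map_zero, LinearMap.zero_apply]
  rw [map_add, hBxy, hBxz, add_zero]

end Aux

/-- In the split quadratic space of dimension `2n+2` with standard hyperbolic
basis `e₁,...,e_{n+1}, f_{n+1},...,f₁`, if the self-adjoint operator `T` with
separable characteristic polynomial maps each of `e₁,...,e_n` into
`Span{e₁,...,e_{n+1}}`, then `Span{e₁,...,e_n, Te₁,...,Te_n}` equals the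
isotropic `(n+1)`-plane `Span{e₁,...,e_{n+1}}`. -/
theorem stmt8 {k : Type*} [Field k] (hchar : (2 : k) ≠ 0) (n : ℕ) (hn : 1 ≤ n)
    {U : Type*} [AddCommGroup U] [Module k U] [FiniteDimensional k U]
    (B : LinearMap.BilinForm k U) (hsymm : LinearMap.BilinForm.IsSymm B)
    (hnd : LinearMap.BilinForm.Nondegenerate B)
    (e f : Fin (n + 1) → U)
    (hef : ∀ i j, B (e i) (f j) = if i = j then 1 else 0)
    (hee : ∀ i j, B (e i) (e j) = 0)
    (hff : ∀ i j, B (f i) (f j) = 0)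
    (hspan : Submodule.span k (Set.range e ∪ Set.range f) = ⊤)
    (T : Module.End k U) (hT : ∀ v w : U, B (T v) w = B v (T w))
    (hsep : (LinearMap.charpoly T).Separable)
    (hTe : ∀ i : Fin n, T (e i.castSucc) ∈ Submodule.span k (Set.range e)) :
    Submodule.span k
        (Set.range (fun i : Fin n => e i.castSucc) ∪
          Set.range (fun i : Fin n => T (e i.castSucc)))
      = Submodule.span k (Set.range e) := by
  classical
  haveI : NeZero n := ⟨by omega⟩
  set E := Submodule.span k (Set.range e) with hEdef
  set X := Submodule.span k (Set.range fun i : Fin n => e i.castSucc) with hXdef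
  set W := Submodule.span k
      (Set.range (fun i : Fin n => e i.castSucc) ∪
        Set.range (fun i : Fin n => T (e i.castSucc))) with hWdef
  have lie : LinearIndependent k e := by
    rw [Fintype.linearIndependent_iff]
    intro g hg j
    have h := congrArg (fun v => B v (f j)) hg
    simpa only [map_sum, map_smul, LinearMap.sum_apply, LinearMap.smul_apply, hef,
      smul_eq_mul, mul_ite, mul_one, mul_zero, Finset.sum_ite_eq', Finset.mem_univ,
      if_true, map_zero, LinearMap.zero_apply] using h
  have lix : LinearIndependent k (fun i : Fin n => e i.castSucc) :=
    lie.comp _ (Fin.castSucc_injective n)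
  have hEfin : Module.finrank k E = n + 1 := by
    rw [hEdef, finrank_span_eq_card lie, Fintype.card_fin]
  have hXfin : Module.finrank k X = n := by
    rw [hXdef, finrank_span_eq_card lix, Fintype.card_fin]
  have hWE : W ≤ E := by
    rw [hWdef, Submodule.span_le]
    rintro v (⟨i, rfl⟩ | ⟨i, rfl⟩)
    · exact Submodule.subset_span ⟨i.castSucc, rfl⟩
    · exact hTe i
  have hXW : X ≤ W := Submodule.span_mono Set.subset_union_left
  have hXE : X ≤ E := hXW.trans hWE
  by_contra hne
  have hlt : W < E := lt_of_le_of_ne hWE hne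
  have hfr : Module.finrank k W < n + 1 := hEfin ▸ Submodule.finrank_lt_finrank_of_lt hlt
  have hWX : W = X := (Submodule.eq_of_le_of_finrank_le hXW (by omega)).symm
  have hgen : ∀ i : Fin n, T (e i.castSucc) ∈ X := by
    intro i
    rw [← hWX, hWdef]
    exact Submodule.subset_span (Or.inr ⟨i, rfl⟩)
  have hXinv : ∀ x ∈ X, T x ∈ X := by
    intro x hx
    induction hx using Submodule.span_induction with
    | mem u hu => obtain ⟨i, rfl⟩ := hu; exact hgen i
    | zero => simp
    | add a b _ _ ha hb => rw [map_add]; exact Submodule.add_mem _ ha hb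
    | smul c a _ ha => rw [map_smul]; exact Submodule.smul_mem _ _ ha
  have hisoE : ∀ x ∈ E, ∀ y ∈ E, B x y = 0 := by
    intro x hx y hy
    induction hx using Submodule.span_induction with
    | mem u hu =>
      obtain ⟨i, rfl⟩ := hu
      induction hy using Submodule.span_induction with
      | mem v hv => obtain ⟨j, rfl⟩ := hv; exact hee i j
      | zero => simp
      | add a b _ _ ha hb => simp [ha, hb]
      | smul c a _ ha => simp [ha]
    | zero => simp
    | add a b _ _ ha hb => simp [ha, hb]
    | smul c a _ ha => simp [ha]
  have hXbot : X = ⊥ :=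
    no_invt_isotropic B hnd T hT hsep X hXinv
      (fun x hx y hy => hisoE x (hXE hx) y (hXE hy))
  have hmem : e ((0 : Fin n).castSucc) ∈ X := Submodule.subset_span ⟨0, rfl⟩
  rw [hXbot, Submodule.mem_bot] at hmem
  have hone : B (e ((0 : Fin n).castSucc)) (f ((0 : Fin n).castSucc)) = 1 := by
    rw [hef]; simp
  rw [hmem] at hone
  simp at hone
end
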